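/- For any p, q ∈ δ_N there exists a supremum p ∨ q under majorization: a vector s ∈ δ_N with p ≺ s, q ≺ s, and s ≺ t for every t ∈ δ_N satisfying p ≺ t and q ≺ t. Hence (δ_N, ≺) is a lattice. -/
import Mathlib


open Finset

/-- Partial sum of the first `l` components of `p`. -/
def PartSum {N : ℕ} (p : Fin N → ℝ) (l : ℕ) : ℝ := ∑ i : Fin N, if (i : ℕ) < l then p i else 0

/-- `p` is a probability vector sorted in decreasing order (an element of δ_N). -/
def IsDecProb {N : ℕ} (p : Fin N → ℝ) : Prop :=
  (∀ i, 0 ≤ p i) ∧ (∀ i j : Fin N, i ≤ j → p j ≤ p i) ∧ ∑ i, p i = 1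

/-- `p ≺ q` : every partial sum of `p` is at most the corresponding partial sum of `q`. -/
def Maj {N : ℕ} (p q : Fin N → ℝ) : Prop := ∀ l : ℕ, PartSum p l ≤ PartSum q l

/-- `s` is the supremum of `p` and `q` in the majorization lattice. -/
def IsSup {N : ℕ} (s p q : Fin N → ℝ) : Prop :=
  IsDecProb s ∧ Maj p s ∧ Maj q s ∧ ∀ t, IsDecProb t → Maj p t → Maj q t → Maj s t

/-- `s` is the infimum of `p` and `q` in the majorization lattice. -/
def IsInf {N : ℕ} (s p q : Fin N → ℝ) : Prop :=
  IsDecProb s ∧ Maj s p ∧ Maj s q ∧ ∀ t, IsDecProb t → Maj t p → Maj t q → Maj t s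

/-- Shannon entropy. -/
noncomputable def H {N : ℕ} (p : Fin N → ℝ) : ℝ := -∑ i, p i * Real.log (p i)

section Aux
variable {N : ℕ}

lemma partSum_zero (t : Fin N → ℝ) : PartSum t 0 = 0 := by simp [PartSum]

lemma partSum_succ (t : Fin N → ℝ) (l : ℕ) :
    PartSum t (l+1) = PartSum t l + if h : l < N then t ⟨l, h⟩ else 0 := by
  unfold PartSum
  have h1 : ∀ i : Fin N, (if (i:ℕ) < l+1 then t i else 0)
      = (if (i:ℕ) < l then t i else 0) + (if (i:ℕ) = l then t i else 0) := by
    intro i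
    rcases lt_trichotomy (i:ℕ) l with h | h | h
    · simp [h, Nat.lt_succ_of_lt h, Nat.ne_of_lt h]
    · simp [h]
    · have h2 : ¬ (i:ℕ) < l + 1 := by omega
      have h3 : ¬ (i:ℕ) < l := by omega
      have h4 : (i:ℕ) ≠ l := by omega
      simp [h2, h3, h4]
  rw [Finset.sum_congr rfl (fun i _ => h1 i), Finset.sum_add_distrib]
  congr 1
  split
  · next h =>
    rw [Finset.sum_eq_single (⟨l, h⟩ : Fin N)]
    · simp
    · intro b _ hb
      have : (b:ℕ) ≠ l := fun hc => hb (Fin.ext hc)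
      simp [this]
    · simp
  · next h =>
    apply Finset.sum_eq_zero
    intro i _
    have : (i:ℕ) ≠ l := by have := i.2; omega
    simp [this]

lemma partSum_of_le (t : Fin N → ℝ) {l : ℕ} (h : N ≤ l) : PartSum t l = ∑ i, t i := by
  unfold PartSum
  exact Finset.sum_congr rfl fun i _ => if_pos (lt_of_lt_of_le i.2 h)

lemma partSum_mono (t : Fin N → ℝ) (ht : ∀ i, 0 ≤ t i) {l l' : ℕ} (h : l ≤ l') :
    PartSum t l ≤ PartSum t l' := by
  apply Finset.sum_le_sum
  intro i _
  by_cases hi : (i:ℕ) < l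
  · rw [if_pos hi, if_pos (lt_of_lt_of_le hi h)]
  · rw [if_neg hi]; split
    · exact ht i
    · exact le_refl 0

lemma partSum_nonneg (t : Fin N → ℝ) (ht : ∀ i, 0 ≤ t i) (l : ℕ) : 0 ≤ PartSum t l := by
  rw [← partSum_zero t]; exact partSum_mono t ht (Nat.zero_le l)

lemma partSum_le_sum (t : Fin N → ℝ) (ht : ∀ i, 0 ≤ t i) (l : ℕ) : PartSum t l ≤ ∑ i, t i := by
  rw [← partSum_of_le t (le_max_right l N)]
  exact partSum_mono t ht (le_max_left l N)

lemma partSum_concave (t : Fin N → ℝ) (ht : IsDecProb t) (l : ℕ) :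
    PartSum t (l+2) - PartSum t (l+1) ≤ PartSum t (l+1) - PartSum t l := by
  rw [partSum_succ t (l+1), partSum_succ t l]
  have : (if h : l+1 < N then t ⟨l+1, h⟩ else 0) ≤ (if h : l < N then t ⟨l, h⟩ else 0) := by
    rcases Nat.lt_or_ge (l+1) N with h1 | h1
    · rw [dif_pos h1, dif_pos (by omega : l < N)]
      exact ht.2.1 ⟨l, by omega⟩ ⟨l+1, h1⟩ (by simp [Fin.le_def])
    · rw [dif_neg (by omega)]
      split
      · exact ht.1 _
      · exact le_refl 0
  linarith

lemma sum_e1 (hN : 0 < N) :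
    ∑ i : Fin N, (if (i:ℕ) = 0 then (1:ℝ) else 0) = 1 := by
  rw [Finset.sum_eq_single (⟨0, hN⟩ : Fin N)]
  · simp
  · intro b _ hb
    have : (b:ℕ) ≠ 0 := fun hc => hb (Fin.ext hc)
    simp [this]
  · simp

lemma e1_mem (hN : 0 < N) (p : Fin N → ℝ) (hp : IsDecProb p) :
    IsDecProb (fun i : Fin N => if (i:ℕ) = 0 then (1:ℝ) else 0) ∧
    Maj p (fun i : Fin N => if (i:ℕ) = 0 then (1:ℝ) else 0) := by
  set e1 : Fin N → ℝ := fun i => if (i:ℕ) = 0 then (1:ℝ) else 0 with he1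
  have hnn : ∀ i, 0 ≤ e1 i := by intro i; dsimp [e1]; split <;> norm_num
  have hdec : ∀ i j : Fin N, i ≤ j → e1 j ≤ e1 i := by
    intro i j hij
    dsimp [e1]
    by_cases hj : (j:ℕ) = 0
    · have : (i:ℕ) = 0 := by have := Fin.le_def.mp hij; omega
      simp [hj, this]
    · rw [if_neg hj]; split <;> norm_num
  have hsum : ∑ i, e1 i = 1 := sum_e1 hN
  have hps : ∀ l : ℕ, 0 < l → PartSum e1 l = 1 := by
    intro l hl
    induction l with
    | zero => omega
    | succ m ih =>
      rcases Nat.eq_zero_or_pos m with hm | hm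
      · subst hm
        rw [partSum_succ, partSum_zero, dif_pos hN]
        simp [e1]
      · rw [partSum_succ, ih hm]
        have : (if h : m < N then e1 ⟨m, h⟩ else 0) = 0 := by
          split
          · simp [e1]
            omega
          · rfl
        rw [this, add_zero]
  refine ⟨⟨hnn, hdec, hsum⟩, ?_⟩
  intro l
  rcases Nat.eq_zero_or_pos l with hl | hl
  · subst hl; rw [partSum_zero, partSum_zero]
  · rw [hps l hl]
    calc PartSum p l ≤ ∑ i, p i := partSum_le_sum p hp.1 l
    _ = 1 := hp.2.2

end Aux

/-- For any p, q ∈ δ_N there exists a supremum under majorization, hence (δ_N, ≺) is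
a lattice. -/
theorem exists_maj_sup {N : ℕ} (p q : Fin N → ℝ) (hp : IsDecProb p) (hq : IsDecProb q) :
    ∃ s : Fin N → ℝ, IsDecProb s ∧ Maj p s ∧ Maj q s ∧
      ∀ t : Fin N → ℝ, IsDecProb t → Maj p t → Maj q t → Maj s t := by
  rcases Nat.eq_zero_or_pos N with h0 | hN
  · subst h0
    exfalso
    have := hp.2.2
    simp at this
  set U : Set (Fin N → ℝ) := {t | IsDecProb t ∧ Maj p t ∧ Maj q t} with hU
  set e1 : Fin N → ℝ := fun i => if (i:ℕ) = 0 then (1:ℝ) else 0 with he1def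
  have he1 : e1 ∈ U := by
    obtain ⟨hd, hmp⟩ := e1_mem hN p hp
    obtain ⟨_, hmq⟩ := e1_mem hN q hq
    exact ⟨hd, hmp, hmq⟩
  set S : ℕ → ℝ := fun l => sInf ((fun t => PartSum t l) '' U) with hSdef
  have hne : ∀ l, ((fun t => PartSum t l) '' U).Nonempty := fun l => ⟨_, e1, he1, rfl⟩
  have hbdd : ∀ l, BddBelow ((fun t => PartSum t l) '' U) := by
    intro l
    refine ⟨0, ?_⟩
    rintro x ⟨t, ht, rfl⟩
    exact partSum_nonneg t ht.1.1 l
  have hSle : ∀ t ∈ U, ∀ l, S l ≤ PartSum t l := by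
    intro t ht l
    exact csInf_le (hbdd l) ⟨t, ht, rfl⟩
  have hleS : ∀ (l : ℕ) (c : ℝ), (∀ t ∈ U, c ≤ PartSum t l) → c ≤ S l := by
    intro l c hc
    apply le_csInf (hne l)
    rintro x ⟨t, ht, rfl⟩
    exact hc t ht
  -- S is monotone
  have hSmono : ∀ l, S l ≤ S (l+1) := by
    intro l
    apply hleS
    intro t ht
    exact le_trans (hSle t ht l) (partSum_mono t ht.1.1 (Nat.le_succ l))
  -- S is concave
  have hSconc : ∀ l, S (l+2) - S (l+1) ≤ S (l+1) - S l := by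
    intro l
    have : S (l+2) + S l ≤ 2 * S (l+1) := by
      have h2 : ∀ t ∈ U, S (l+2) + S l ≤ 2 * PartSum t (l+1) := by
        intro t ht
        have hc := partSum_concave t ht.1 l
        have h1 := hSle t ht (l+2)
        have h2 := hSle t ht l
        linarith
      have := hleS (l+1) ((S (l+2) + S l) / 2) (by intro t ht; linarith [h2 t ht])
      linarith
    linarith
  have hS0 : S 0 = 0 := by
    apply le_antisymm
    · rw [← partSum_zero e1]; exact hSle e1 he1 0
    · apply hleS; intro t _; rw [partSum_zero]
  have hSN : S N = 1 := by
    apply le_antisymm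
    · have := hSle e1 he1 N
      rwa [partSum_of_le e1 (le_refl N), he1.1.2.2] at this
    · apply hleS
      intro t ht
      rw [partSum_of_le t (le_refl N), ht.1.2.2]
  -- the candidate vector
  set s : Fin N → ℝ := fun i => S ((i:ℕ)+1) - S (i:ℕ) with hsdef
  have hsnn : ∀ i, 0 ≤ s i := by intro i; dsimp [s]; linarith [hSmono (i:ℕ)]
  have hd : Antitone (fun k : ℕ => S (k+1) - S k) :=
    antitone_nat_of_succ_le (fun k => hSconc k)
  have hsdec : ∀ i j : Fin N, i ≤ j → s j ≤ s i := by
    intro i j hij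
    exact hd (Fin.le_def.mp hij)
  have hssum : ∑ i, s i = 1 := by
    have : ∑ i : Fin N, s i = ∑ k ∈ Finset.range N, (S (k+1) - S k) := by
      rw [Fin.sum_univ_eq_sum_range (fun k => S (k+1) - S k) N]
    rw [this, Finset.sum_range_sub S, hS0, hSN, sub_zero]
  have hPS : ∀ l, l ≤ N → PartSum s l = S l := by
    intro l
    induction l with
    | zero => intro _; rw [partSum_zero, hS0]
    | succ m ih =>
      intro hm
      have hmN : m < N := by omega
      rw [partSum_succ, ih (by omega), dif_pos hmN]
      dsimp [s]
      ring
  refine ⟨s, ⟨hsnn, hsdec, hssum⟩, ?_, ?_, ?_⟩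
  · intro l
    rcases le_or_gt l N with hl | hl
    · rw [hPS l hl]
      apply hleS
      intro t ht
      exact ht.2.1 l
    · rw [partSum_of_le s (by omega), partSum_of_le p (by omega), hssum, hp.2.2]
  · intro l
    rcases le_or_gt l N with hl | hl
    · rw [hPS l hl]
      apply hleS
      intro t ht
      exact ht.2.2 l
    · rw [partSum_of_le s (by omega), partSum_of_le q (by omega), hssum, hq.2.2]
  · intro t ht hpt hqt l
    have htU : t ∈ U := ⟨ht, hpt, hqt⟩
    rcases le_or_gt l N with hl | hl
    · rw [hPS l hl]
      exact hSle t htU l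
    · rw [partSum_of_le s (by omega), partSum_of_le t (by omega), hssum, ht.2.2]
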